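/- Let μ be a probability measure on a finite set D and suppose for each pair x, y ∈ D there is a path x = x̃⁰, x̃¹, …, x̃^{|J_{xy}|} = y within D where each step is a jump x̃^{k+1} = Δ_{j_k}(x̃^k), with path lengths uniformly bounded by N. If φ ≥ δ > 0, then for any f with μ(f 1_D) = 0: μ(f² 1_D) ≤ (N²/(2 δ min_{x∈D} μ(x))) · μ(Γ(f,f) 1_D), where Γ(f,f)(x) = (1/2) Σ_i φ(x^i)(f(Δ_i(x)) − f(x))². -/
import Mathlib

/-- Any jump-path inside `D` can be loop-erased to a path with pairwise distinct
vertices, same endpoints, and length at most the original length. -/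
theorem exists_injective_path {V : Type*} {I : Type*} (Δ : I → V → V) (D : Finset V) :
    ∀ (k : ℕ) (p : ℕ → V) (j : ℕ → I),
      (∀ l < k, p (l + 1) = Δ (j l) (p l)) → (∀ l ≤ k, p l ∈ D) →
      ∃ (k' : ℕ) (p' : ℕ → V) (j' : ℕ → I), k' ≤ k ∧ p' 0 = p 0 ∧ p' k' = p k ∧
        (∀ l < k', p' (l + 1) = Δ (j' l) (p' l)) ∧ (∀ l ≤ k', p' l ∈ D) ∧
        (∀ l₁ ≤ k', ∀ l₂ ≤ k', p' l₁ = p' l₂ → l₁ = l₂) := by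
  intro k
  induction k using Nat.strong_induction_on with
  | _ k IH =>
    intro p j hstep hmem
    by_cases hinj : ∀ l₁ ≤ k, ∀ l₂ ≤ k, p l₁ = p l₂ → l₁ = l₂
    · exact ⟨k, p, j, le_refl _, rfl, rfl, hstep, hmem, hinj⟩
    · push_neg at hinj
      obtain ⟨l₁, hl₁, l₂, hl₂, heq, hne⟩ := hinj
      -- wlog l₁ < l₂
      have main : ∀ a b : ℕ, a < b → b ≤ k → p a = p b →
          ∃ (k' : ℕ) (p' : ℕ → V) (j' : ℕ → I), k' ≤ k ∧ p' 0 = p 0 ∧ p' k' = p k ∧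
            (∀ l < k', p' (l + 1) = Δ (j' l) (p' l)) ∧ (∀ l ≤ k', p' l ∈ D) ∧
            (∀ m₁ ≤ k', ∀ m₂ ≤ k', p' m₁ = p' m₂ → m₁ = m₂) := by
        intro a b hab hbk hpab
        set d := b - a with hd
        set q : ℕ → V := fun l => if l < a then p l else p (l + d) with hq
        set i' : ℕ → I := fun l => if l < a then j l else j (l + d) with hi'
        have hdk : d ≤ k := by omega
        have hq0 : q 0 = p 0 := by
          by_cases h0 : 0 < a
          · simp [hq, h0]
          · have ha0 : a = 0 := by omega
            subst ha0
            have hb : 0 + d = b := by omega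
            simp only [hq]
            rw [if_neg (lt_irrefl 0), hb, ← hpab]
        have hqk : q (k - d) = p k := by
          have h1 : ¬ (k - d < a) := by omega
          have h2 : k - d + d = k := by omega
          simp only [hq, h1, if_false, h2]
        have hqstep : ∀ l < k - d, q (l + 1) = Δ (i' l) (q l) := by
          intro l hl
          by_cases hla : l < a
          · have hql : q l = p l := by simp [hq, hla]
            have hil : i' l = j l := by simp [hi', hla]
            by_cases hl1a : l + 1 < a
            · have : q (l + 1) = p (l + 1) := by simp [hq, hl1a]
              rw [this, hql, hil]
              exact hstep l (by omega)
            · have hl1 : l + 1 = a := by omega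
              have : q (l + 1) = p (l + 1 + d) := by simp [hq, hl1a]
              rw [this, hql, hil]
              have : l + 1 + d = b := by omega
              rw [this, ← hpab, ← hl1]
              exact hstep l (by omega)
          · have hql : q l = p (l + d) := by simp [hq, hla]
            have hil : i' l = j (l + d) := by simp [hi', hla]
            have hl1a : ¬ (l + 1 < a) := by omega
            have : q (l + 1) = p (l + 1 + d) := by simp [hq, hl1a]
            rw [this, hql, hil]
            have : l + 1 + d = (l + d) + 1 := by omega
            rw [this]
            exact hstep (l + d) (by omega)
        have hqmem : ∀ l ≤ k - d, q l ∈ D := by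
          intro l hl
          by_cases hla : l < a
          · simpa [hq, hla] using hmem l (by omega)
          · simpa [hq, hla] using hmem (l + d) (by omega)
        have hlt : k - d < k := by omega
        obtain ⟨k', p', j', hk', h0', hk'', hstep', hmem', hinj'⟩ :=
          IH (k - d) hlt q i' hqstep hqmem
        exact ⟨k', p', j', by omega, h0'.trans hq0, hk''.trans hqk, hstep', hmem', hinj'⟩
      rcases Nat.lt_or_ge l₁ l₂ with h | h
      · exact main l₁ l₂ h hl₂ heq
      · exact main l₂ l₁ (by omega) hl₁ heq.symm

open Real Finset

/-- Local Poincaré inequality on the finite set `D` via jump-paths. -/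
theorem local_poincare_on_finite_set (N : ℕ) (hN : 0 < N) (φ : ℝ → ℝ)
    (δ : ℝ) (hδ : 0 < δ) (hφ : ∀ x : ℝ, δ ≤ φ x)
    (W : Fin N → Fin N → ℝ)
    (Δ : Fin N → (Fin N → ℝ) → (Fin N → ℝ))
    (hΔ : ∀ i x j, Δ i x j = if j = i then 0 else x j + W i j)
    (D : Finset (Fin N → ℝ)) (hD : D.Nonempty)
    (μ : (Fin N → ℝ) → ℝ)
    (hμpos : ∀ x ∈ D, 0 < μ x) (hμ1 : ∑ x ∈ D, μ x = 1)
    (hpath : ∀ x ∈ D, ∀ y ∈ D, ∃ (k : ℕ) (p : ℕ → (Fin N → ℝ)) (j : ℕ → Fin N),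
      k ≤ N ∧ p 0 = x ∧ p k = y ∧ (∀ l < k, p (l + 1) = Δ (j l) (p l)) ∧
        (∀ l ≤ k, p l ∈ D))
    (f : (Fin N → ℝ) → ℝ) (hf : ∑ x ∈ D, μ x * f x = 0) :
    ∑ x ∈ D, μ x * (f x) ^ 2
      ≤ ((N : ℝ) ^ 2 / (2 * δ * D.inf' hD μ))
        * ∑ x ∈ D, μ x * ((1 / 2) * ∑ i, φ (x i) * (f (Δ i x) - f x) ^ 2) := by
  set m := D.inf' hD μ with hm_def
  have hm : 0 < m := by
    obtain ⟨z, hz, hzeq⟩ := Finset.exists_mem_eq_inf' hD μ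
    rw [hm_def, hzeq]; exact hμpos z hz
  have hmle : ∀ x ∈ D, m ≤ μ x := fun x hx => Finset.inf'_le μ hx
  have hφ0 : ∀ x : ℝ, 0 ≤ φ x := fun x => le_trans hδ.le (hφ x)
  set g : (Fin N → ℝ) → ℝ := fun z => μ z * ∑ i, φ (z i) * (f (Δ i z) - f z) ^ 2 with hg_def
  set S : ℝ := ∑ z ∈ D, g z with hS_def
  have hgnonneg : ∀ z ∈ D, 0 ≤ g z := fun z hz =>
    mul_nonneg (hμpos z hz).le
      (Finset.sum_nonneg fun i _ => mul_nonneg (hφ0 _) (sq_nonneg _))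
  have hS0 : 0 ≤ S := Finset.sum_nonneg hgnonneg
  have hδm : (0:ℝ) < δ * m := mul_pos hδ hm
  -- The right-hand-side sum equals S/2
  have hhalf : ∑ x ∈ D, μ x * ((1 / 2) * ∑ i, φ (x i) * (f (Δ i x) - f x) ^ 2)
      = (1 / 2) * S := by
    rw [hS_def, Finset.mul_sum]
    exact Finset.sum_congr rfl fun x _ => by rw [hg_def]; ring
  rcases Nat.lt_or_ge N 2 with hN1 | hN2
  -- Case N = 1 : D is a singleton and f vanishes on it
  · have hNone : N = 1 := by omega
    subst hNone
    have huniq : ∀ x ∈ D, ∀ y ∈ D, x = y := by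
      have key : ∀ x ∈ D, ∀ y ∈ D, y = x ∨ y = (fun _ => 0) := by
        intro x hx y hy
        obtain ⟨k, p, j, hk, h0, hk', hstep, hmem⟩ := hpath x hx y hy
        interval_cases k
        · left; rw [← h0, ← hk']
        · right
          have h1 : p 1 = Δ (j 0) (p 0) := hstep 0 (by omega)
          rw [← hk']
          funext c
          rw [h1, hΔ]
          have hc : c = j 0 := Subsingleton.elim c (j 0)
          simp [hc]
      intro x hx y hy
      rcases key x hx y hy with h1 | h1
      · exact h1.symm
      · rcases key y hy x hx with h2 | h2
        · exact h2
        · rw [h1, h2]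
      -- done
    obtain ⟨x₀, hx₀⟩ := hD
    have hDs : D = {x₀} :=
      Finset.eq_singleton_iff_unique_mem.mpr ⟨hx₀, fun y hy => huniq y hy x₀ hx₀⟩
    have hμx₀ : μ x₀ = 1 := by rw [hDs] at hμ1; simpa using hμ1
    have hfx₀ : f x₀ = 0 := by
      rw [hDs] at hf; simp [hμx₀] at hf; simpa using hf
    have hLHS : ∑ x ∈ D, μ x * (f x) ^ 2 = 0 := by
      rw [hDs]; simp [hfx₀]
    rw [hLHS, hhalf]
    have h2δm : (0:ℝ) ≤ 2 * δ * m := by nlinarith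
    exact mul_nonneg (div_nonneg (sq_nonneg _) h2δm) (by linarith)
  -- Main case N ≥ 2
  · -- pairwise bound via loop-erased paths
    have hpair : ∀ x ∈ D, ∀ y ∈ D, (f x - f y) ^ 2 ≤ (N : ℝ) * (S / (δ * m)) := by
      intro x hx y hy
      obtain ⟨k₀, p₀, j₀, hk₀, h00, h0k, hstep₀, hmem₀⟩ := hpath x hx y hy
      obtain ⟨k, p, j, hkk, h0, hk', hstep, hmem, hinj⟩ :=
        exists_injective_path Δ D k₀ p₀ j₀ hstep₀ hmem₀
      have hkN : k ≤ N := hkk.trans hk₀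
      rw [h00] at h0
      rw [h0k] at hk'
      have htel : f y - f x = ∑ l ∈ Finset.range k, (f (p (l + 1)) - f (p l)) := by
        calc f y - f x = f (p k) - f (p 0) := by rw [h0, hk']
        _ = ∑ l ∈ Finset.range k, (f (p (l + 1)) - f (p l)) :=
          (Finset.sum_range_sub (fun l => f (p l)) k).symm
      have hCS : (f y - f x) ^ 2
          ≤ (k : ℝ) * ∑ l ∈ Finset.range k, (f (p (l + 1)) - f (p l)) ^ 2 := by
        rw [htel]
        have := sq_sum_le_card_mul_sum_sq
          (s := Finset.range k) (f := fun l => f (p (l + 1)) - f (p l))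
        simpa using this
      have hstepb : ∀ l < k, δ * m * (f (p (l + 1)) - f (p l)) ^ 2 ≤ g (p l) := by
        intro l hl
        have hpl : p l ∈ D := hmem l hl.le
        have h1 : δ * (f (p (l + 1)) - f (p l)) ^ 2
            ≤ φ ((p l) (j l)) * (f (p (l + 1)) - f (p l)) ^ 2 :=
          mul_le_mul_of_nonneg_right (hφ _) (sq_nonneg _)
        have h2 : φ ((p l) (j l)) * (f (p (l + 1)) - f (p l)) ^ 2
            ≤ ∑ i, φ ((p l) i) * (f (Δ i (p l)) - f (p l)) ^ 2 := by
          have hrw : p (l + 1) = Δ (j l) (p l) := hstep l hl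
          rw [hrw]
          exact Finset.single_le_sum
            (f := fun i => φ ((p l) i) * (f (Δ i (p l)) - f (p l)) ^ 2)
            (fun i _ => mul_nonneg (hφ0 _) (sq_nonneg _)) (Finset.mem_univ (j l))
        have h3 : m ≤ μ (p l) := hmle _ hpl
        have hsnn : 0 ≤ ∑ i, φ ((p l) i) * (f (Δ i (p l)) - f (p l)) ^ 2 :=
          Finset.sum_nonneg fun i _ => mul_nonneg (hφ0 _) (sq_nonneg _)
        calc δ * m * (f (p (l + 1)) - f (p l)) ^ 2
            = m * (δ * (f (p (l + 1)) - f (p l)) ^ 2) := by ring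
        _ ≤ m * (φ ((p l) (j l)) * (f (p (l + 1)) - f (p l)) ^ 2) :=
            mul_le_mul_of_nonneg_left h1 hm.le
        _ ≤ m * ∑ i, φ ((p l) i) * (f (Δ i (p l)) - f (p l)) ^ 2 :=
            mul_le_mul_of_nonneg_left h2 hm.le
        _ ≤ μ (p l) * ∑ i, φ ((p l) i) * (f (Δ i (p l)) - f (p l)) ^ 2 :=
            mul_le_mul_of_nonneg_right h3 hsnn
        _ = g (p l) := by rw [hg_def]
      have hsumstep : ∑ l ∈ Finset.range k, (f (p (l + 1)) - f (p l)) ^ 2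
          ≤ S / (δ * m) := by
        rw [le_div_iff₀ hδm]
        calc (∑ l ∈ Finset.range k, (f (p (l + 1)) - f (p l)) ^ 2) * (δ * m)
            = ∑ l ∈ Finset.range k, δ * m * (f (p (l + 1)) - f (p l)) ^ 2 := by
              rw [Finset.sum_mul]; exact Finset.sum_congr rfl fun l _ => by ring
        _ ≤ ∑ l ∈ Finset.range k, g (p l) :=
            Finset.sum_le_sum fun l hl => hstepb l (Finset.mem_range.mp hl)
        _ = ∑ z ∈ (Finset.range k).image p, g z := by
            rw [Finset.sum_image]
            intro a ha b hb hab
            exact hinj a (Finset.mem_range.mp ha).le b (Finset.mem_range.mp hb).le hab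
        _ ≤ S := by
            rw [hS_def]
            refine Finset.sum_le_sum_of_subset_of_nonneg ?_ (fun z hz _ => hgnonneg z hz)
            intro z hz
            obtain ⟨l, hl, rfl⟩ := Finset.mem_image.mp hz
            exact hmem l (Finset.mem_range.mp hl).le
      have hswap : (f x - f y) ^ 2 = (f y - f x) ^ 2 := by ring
      calc (f x - f y) ^ 2 = (f y - f x) ^ 2 := hswap
      _ ≤ (k : ℝ) * ∑ l ∈ Finset.range k, (f (p (l + 1)) - f (p l)) ^ 2 := hCS
      _ ≤ (k : ℝ) * (S / (δ * m)) :=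
          mul_le_mul_of_nonneg_left hsumstep (by positivity)
      _ ≤ (N : ℝ) * (S / (δ * m)) :=
          mul_le_mul_of_nonneg_right (by exact_mod_cast hkN) (div_nonneg hS0 hδm.le)
    -- variance identity
    set T : ℝ := ∑ y ∈ D, μ y * f y ^ 2 with hT_def
    have inner : ∀ x, ∑ y ∈ D, μ x * μ y * (f x - f y) ^ 2
        = μ x * f x ^ 2 * (∑ y ∈ D, μ y) - 2 * (μ x * f x) * (∑ y ∈ D, μ y * f y)
          + μ x * T := by
      intro x
      rw [hT_def, Finset.mul_sum, Finset.mul_sum, Finset.mul_sum,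
        ← Finset.sum_sub_distrib, ← Finset.sum_add_distrib]
      exact Finset.sum_congr rfl fun y _ => by ring
    have hvar : 2 * T = ∑ x ∈ D, ∑ y ∈ D, μ x * μ y * (f x - f y) ^ 2 := by
      have h1 : ∑ x ∈ D, ∑ y ∈ D, μ x * μ y * (f x - f y) ^ 2
          = ∑ x ∈ D, (μ x * f x ^ 2 + μ x * T) := by
        refine Finset.sum_congr rfl fun x _ => ?_
        rw [inner x, hμ1, hf]; ring
      rw [h1, Finset.sum_add_distrib, ← Finset.sum_mul, hμ1, ← hT_def]; ring
    have hdouble : ∑ x ∈ D, ∑ y ∈ D, μ x * μ y * (f x - f y) ^ 2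
        ≤ (N : ℝ) * (S / (δ * m)) := by
      set C : ℝ := (N : ℝ) * (S / (δ * m)) with hC_def
      have hC0 : 0 ≤ C := mul_nonneg (Nat.cast_nonneg N) (div_nonneg hS0 hδm.le)
      calc ∑ x ∈ D, ∑ y ∈ D, μ x * μ y * (f x - f y) ^ 2
          ≤ ∑ x ∈ D, ∑ y ∈ D, μ x * μ y * C := by
            refine Finset.sum_le_sum fun x hx => Finset.sum_le_sum fun y hy => ?_
            exact mul_le_mul_of_nonneg_left (hpair x hx y hy)
              (mul_nonneg (hμpos x hx).le (hμpos y hy).le)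
      _ = C := by
          have hx1 : ∀ x, ∑ y ∈ D, μ x * μ y * C = μ x * C := by
            intro x
            calc ∑ y ∈ D, μ x * μ y * C = ∑ y ∈ D, (μ x * C) * μ y :=
                  Finset.sum_congr rfl fun y _ => by ring
            _ = (μ x * C) * ∑ y ∈ D, μ y := by rw [Finset.mul_sum]
            _ = μ x * C := by rw [hμ1, mul_one]
          rw [Finset.sum_congr rfl fun x _ => hx1 x, ← Finset.sum_mul, hμ1, one_mul]
    -- conclude
    have hTb : T ≤ (N : ℝ) * (S / (δ * m)) / 2 := by
      linarith [hvar, hdouble]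
    rw [hhalf]
    have hNR : (2 : ℝ) ≤ (N : ℝ) := by exact_mod_cast hN2
    have heq : (N : ℝ) ^ 2 / (2 * δ * m) * ((1 / 2) * S) - (N : ℝ) * (S / (δ * m)) / 2
        = ((N : ℝ) ^ 2 - 2 * (N : ℝ)) * (S / (δ * m)) / 4 := by
      have hδ' : δ ≠ 0 := hδ.ne'
      have hm' : m ≠ 0 := hm.ne'
      field_simp
      ring
    have hNsq : (0:ℝ) ≤ (N : ℝ) ^ 2 - 2 * (N : ℝ) := by nlinarith
    have h4 : (0:ℝ) ≤ ((N : ℝ) ^ 2 - 2 * (N : ℝ)) * (S / (δ * m)) / 4 :=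
      div_nonneg (mul_nonneg hNsq (div_nonneg hS0 hδm.le)) (by norm_num)
    linarith
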